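/- If A is symmetric, then every (complex) eigenvalue of the generalized Laplacian L_g is real; that is, although L_g is in general not symmetric, it is similar to the symmetric matrix D_g − R A R^{-1}, and hence its characteristic polynomial has only real roots. -/

import Mathlib

open Polynomial Matrix
open scoped ComplexOrder

/-- Characteristic polynomial is invariant under conjugation `P * M * Q` with `P * Q = 1`. -/
lemma charpoly_conj_aux {n : ℕ} {R : Type*} [CommRing R]
    (P M Q : Matrix (Fin n) (Fin n) R) (h : P * Q = 1) :
    (P * M * Q).charpoly = M.charpoly := by
  have key : charmatrix (P * M * Q) =
      (P.map C) * charmatrix M * (Q.map C) := by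
    have hscal : (P.map C) * Matrix.scalar (Fin n) (X : R[X]) * (Q.map C)
        = Matrix.scalar (Fin n) (X : R[X]) := by
      rw [mul_assoc, (Matrix.scalar_commute (X : R[X]) (fun r' => Commute.all _ _)
        (Q.map C)).eq, ← mul_assoc, ← Matrix.map_mul, h]
      simp
    rw [charmatrix, charmatrix]
    simp only [RingHom.mapMatrix_apply]
    rw [mul_sub, sub_mul, hscal, ← Matrix.map_mul, ← Matrix.map_mul]
  rw [Matrix.charpoly, Matrix.charpoly, key, det_mul, det_mul]
  have hdet : (P.map C).det * (Q.map C).det = 1 := by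
    rw [← det_mul, ← Matrix.map_mul, h]
    simp
  calc (P.map C).det * (charmatrix M).det * (Q.map C).det
      = (charmatrix M).det * ((P.map C).det * (Q.map C).det) := by ring
    _ = (charmatrix M).det := by rw [hdet, mul_one]

/-- Every complex root of the characteristic polynomial of (the complexification of)
a real symmetric matrix is real. -/
lemma symm_charpoly_root_real {n : ℕ} (S : Matrix (Fin n) (Fin n) ℝ)
    (hS : S.IsSymm) (μ : ℂ)
    (hroot : (Matrix.charpoly (S.map (algebraMap ℝ ℂ))).IsRoot μ) : μ.im = 0 := by
  set M : Matrix (Fin n) (Fin n) ℂ := S.map (algebraMap ℝ ℂ) with hM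
  have hMsymm : ∀ i j, M i j = M j i := by
    intro i j
    have := congrFun (congrFun hS.eq j) i
    simp only [hM, Matrix.map_apply, Matrix.transpose_apply] at this ⊢
    rw [show S i j = S j i from by rw [← this]]
  have hMreal : ∀ i j, (starRingEnd ℂ) (M i j) = M i j := by
    intro i j
    simp [hM, Matrix.map_apply, Complex.conj_ofReal]
  -- root of charpoly gives det (scalar μ - M) = 0
  have hdet : (Matrix.scalar (Fin n) μ - M).det = 0 := by
    have h := hroot
    rw [Polynomial.IsRoot, Matrix.charpoly, _root_.eval_det, matPolyEquiv_charmatrix] at h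
    simpa using h
  obtain ⟨v, hv0, hv⟩ := (Matrix.exists_mulVec_eq_zero_iff).2 hdet
  have hscal : Matrix.scalar (Fin n) μ = μ • (1 : Matrix (Fin n) (Fin n) ℂ) := by
    ext i j
    by_cases hij : i = j <;>
      simp [Matrix.scalar_apply, Matrix.diagonal_apply, Matrix.one_apply, hij]
  have hMv : M *ᵥ v = μ • v := by
    rw [Matrix.sub_mulVec, hscal, Matrix.smul_mulVec, Matrix.one_mulVec] at hv
    have := sub_eq_zero.mp hv
    rw [← this]
  set c : ℂ := star v ⬝ᵥ v with hc
  have hcne : c ≠ 0 := fun h => hv0 (dotProduct_star_self_eq_zero.mp h)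
  have hcconj : (starRingEnd ℂ) c = c := by
    simp only [hc, dotProduct, Pi.star_apply, map_sum, _root_.map_mul, Complex.conj_conj,
      RingHom.coe_coe]
    refine Finset.sum_congr rfl fun i _ => ?_
    simp [Complex.star_def, mul_comm]
  have ht1 : star v ⬝ᵥ (M *ᵥ v) = μ * c := by
    rw [hMv, dotProduct_smul, smul_eq_mul]
  have ht2 : (starRingEnd ℂ) (star v ⬝ᵥ (M *ᵥ v)) = star v ⬝ᵥ (M *ᵥ v) := by
    have h1 : (starRingEnd ℂ) (star v ⬝ᵥ (M *ᵥ v))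
        = ∑ i, ∑ j, v i * (M i j * (starRingEnd ℂ) (v j)) := by
      simp [dotProduct, Matrix.mulVec, Complex.star_def, map_sum, _root_.map_mul,
        hMreal, Finset.mul_sum]
    have h2 : star v ⬝ᵥ (M *ᵥ v)
        = ∑ i, ∑ j, (starRingEnd ℂ) (v i) * (M i j * v j) := by
      simp [dotProduct, Matrix.mulVec, Complex.star_def, Finset.mul_sum]
    rw [h1, h2, Finset.sum_comm]
    refine Finset.sum_congr rfl fun x _ => Finset.sum_congr rfl fun y _ => ?_
    rw [hMsymm y x]
    ring
  have hfix : (starRingEnd ℂ) (μ * c) = μ * c := by rw [← ht1, ht2, ht1]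
  rw [_root_.map_mul, hcconj] at hfix
  exact Complex.conj_eq_iff_im.mp (mul_right_cancel₀ hcne hfix)

/-- If `A` is symmetric, then every (complex) eigenvalue of the generalized
Laplacian `L_g` is real; i.e., every complex root of its characteristic polynomial has
zero imaginary part. -/
theorem generalized_laplacian_real_eigenvalues
    (n r : ℕ) (hn : 2 ≤ n) (hr : 1 ≤ r) (hrn : r < n)
    (γ : ℝ) (hγ : 0 < γ)
    (A Ag Dg Lg : Matrix (Fin n) (Fin n) ℝ)
    (hAsymm : A.IsSymm) (hA0 : ∀ i : Fin n, A i i = 0)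
    (hAg : ∀ i j : Fin n, Ag i j =
      if ((i : ℕ) < r ↔ (j : ℕ) < r) then A i j
      else if (i : ℕ) < r then γ * A i j
      else γ⁻¹ * A i j)
    (hDg : Dg = Matrix.diagonal (fun i : Fin n =>
      (∑ j : Fin n, if ((i : ℕ) < r ↔ (j : ℕ) < r) then A i j else 0) -
      (∑ j : Fin n, if ((i : ℕ) < r ↔ (j : ℕ) < r) then 0 else A i j)))
    (hLg : Lg = Dg - Ag) :
    ∀ μ : ℂ, (Matrix.charpoly (Lg.map (algebraMap ℝ ℂ))).IsRoot μ → μ.im = 0 := by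
  intro μ hroot
  set p : Fin n → ℝ := fun i => if (i : ℕ) < r then γ⁻¹ else 1 with hp
  have hpne : ∀ i, p i ≠ 0 := by
    intro i
    by_cases hi : (i : ℕ) < r <;> simp [hp, hi, inv_ne_zero hγ.ne']
  set P : Matrix (Fin n) (Fin n) ℝ := Matrix.diagonal p with hP
  set Q : Matrix (Fin n) (Fin n) ℝ := Matrix.diagonal (fun i => (p i)⁻¹) with hQ
  have hPQ : P * Q = 1 := by
    rw [hP, hQ, Matrix.diagonal_mul_diagonal]
    convert Matrix.diagonal_one
    exact mul_inv_cancel₀ (hpne _)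
  have hconj : P * Lg * Q = Dg - A := by
    ext i j
    rw [hP, hQ, Matrix.mul_diagonal, Matrix.diagonal_mul, hLg, hDg, Matrix.sub_apply,
      Matrix.sub_apply, hAg i j]
    by_cases hi : (i : ℕ) < r <;> by_cases hj : (j : ℕ) < r
    · simp only [hp, hi, hj, if_pos, iff_true, if_true, inv_inv]
      field_simp
    · have hij : i ≠ j := fun h => hj (h ▸ hi)
      rw [Matrix.diagonal_apply_ne _ hij]
      simp only [hp, hi, hj, if_true, if_false, iff_false, not_true_eq_false, inv_one]
      field_simp
      ring
    · have hij : i ≠ j := fun h => hi (h ▸ hj)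
      rw [Matrix.diagonal_apply_ne _ hij]
      simp only [hp, hi, hj, if_true, if_false, false_iff, not_true_eq_false, not_false_eq_true, inv_inv, inv_one]
      field_simp
      ring
    · simp only [hp, hi, hj, if_false, iff_true, not_lt, inv_one]
      simp
  have hch : Lg.charpoly = (Dg - A).charpoly := by
    rw [← hconj, charpoly_conj_aux _ _ _ hPQ]
  have hmap : (Lg.map (algebraMap ℝ ℂ)).charpoly = ((Dg - A).map (algebraMap ℝ ℂ)).charpoly := by
    rw [Matrix.charpoly_map, Matrix.charpoly_map, hch]
  have hsymm : (Dg - A).IsSymm := by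
    rw [hDg]
    exact (Matrix.isSymm_diagonal _).sub hAsymm
  exact symm_charpoly_root_real _ hsymm μ (by rwa [hmap] at hroot)
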